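/- arXiv:1001.3351 — 2 statements merged into one kernel-verified Lean document; each statement's English description precedes it below -/
import Mathlib

section
/- Let n ≥ 2 and let c₁, c₂ ∈ ℝ with c₁·c₂ ≠ 0. Consider the two curve-germs in ℝ^{2n} (coordinates (p₁,q₁,p₂,q₂,…,pₙ,qₙ), all unlisted coordinates equal to 0): B₁(t) = (t³, −c₁t², 0, −t², 0, …, 0) and B₂(t) = (t³, −c₂t², −t², 0, 0, …, 0) (the class (T₇)⁰). Then Lt(B₁,B₂) = 2, Lt(B₁) = 3 and Lt(B₂) = 3. -/
noncomputable section

/-- The order of vanishing at `0` of a function `h : ℝ → ℝ`: the least `k ≥ 1` such that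
the `k`-th derivative of `h` at `0` is nonzero, and `∞` if all derivatives vanish at `0`. -/
def vanishOrder (h : ℝ → ℝ) : ℕ∞ :=
  sInf {k : ℕ∞ | ∃ m : ℕ, k = m ∧ 1 ≤ m ∧ iteratedDeriv m h 0 ≠ 0}

/-- The standard symplectic form `ω = ∑ dpᵢ ∧ dqᵢ` on `ℝ^{2n}`, where the coordinates are
ordered as `(p₁, q₁, …, pₙ, qₙ)` (so `pᵢ` has index `2(i-1)` and `qᵢ` has index `2(i-1)+1`). -/
def stdSymp (n : ℕ) (u v : Fin (2 * n) → ℝ) : ℝ :=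
  ∑ i : Fin n,
    (u ⟨2 * i.val, by have := i.isLt; omega⟩ * v ⟨2 * i.val + 1, by have := i.isLt; omega⟩ -
     u ⟨2 * i.val + 1, by have := i.isLt; omega⟩ * v ⟨2 * i.val, by have := i.isLt; omega⟩)

/-- A germ at `0` of a smooth Lagrangian submanifold of `(ℝ^{2n}, ω)`, given by `n` smooth
functions `H₁, …, Hₙ` vanishing at `0`, whose differentials are linearly independent at the
points of `{H₁ = ⋯ = Hₙ = 0}` near `0`, and such that `ω` vanishes on `ker DH(x)` at every
such point. -/
structure LagrangianGerm (n : ℕ) : Type where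
  H : Fin n → (Fin (2 * n) → ℝ) → ℝ
  smooth : ∀ i, ContDiff ℝ (⊤ : ℕ∞) (H i)
  zero_at_zero : ∀ i, H i 0 = 0
  lagrangian : ∃ U : Set (Fin (2 * n) → ℝ), IsOpen U ∧ 0 ∈ U ∧
    ∀ x ∈ U, (∀ i, H i x = 0) →
      LinearIndependent ℝ (fun i => fderiv ℝ (H i) x) ∧
      ∀ u v : Fin (2 * n) → ℝ, (∀ i, fderiv ℝ (H i) x u = 0) →
        (∀ i, fderiv ℝ (H i) x v = 0) → stdSymp n u v = 0

/-- The tangency order `t(f, L)` of a curve `f` to a Lagrangian submanifold-germ `L`: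
the minimum over `i` of the order of vanishing at `0` of `Hᵢ ∘ f`. -/
def tOrd {n : ℕ} (f : ℝ → Fin (2 * n) → ℝ) (L : LagrangianGerm n) : ℕ∞ :=
  ⨅ i : Fin n, vanishOrder (fun t => L.H i (f t))

/-- The Lagrangian tangency order `Lt(f)` of a curve `f`. -/
def Lt1 {n : ℕ} (f : ℝ → Fin (2 * n) → ℝ) : ℕ∞ :=
  ⨆ L : LagrangianGerm n, tOrd f L

/-- The Lagrangian tangency order `Lt(f, g)` of a multi-germ of two curves. -/
def Lt2 {n : ℕ} (f g : ℝ → Fin (2 * n) → ℝ) : ℕ∞ :=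
  ⨆ L : LagrangianGerm n, min (tOrd f L) (tOrd g L)

/-- The Lagrangian tangency order `Lt(f, g, h)` of a multi-germ of three curves. -/
def Lt3 {n : ℕ} (f g h : ℝ → Fin (2 * n) → ℝ) : ℕ∞ :=
  ⨆ L : LagrangianGerm n, min (tOrd f L) (min (tOrd g L) (tOrd h L))



open Filter Asymptotics

/-! ### Auxiliary analytic lemmas -/

/-- One-variable MVT in a convenient form. -/
lemma mvt1 (φ φ' : ℝ → ℝ) (hφ : ∀ s, HasDerivAt φ (φ' s) s) (r : ℝ) :
    ∃ ξ : ℝ, |ξ| ≤ |r| ∧ φ r - φ 0 = r * φ' ξ := by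
  rcases lt_trichotomy r 0 with hr | hr | hr
  · obtain ⟨c, hc, heq⟩ := exists_hasDerivAt_eq_slope φ φ' hr
      (fun x _ => (hφ x).continuousAt.continuousWithinAt) (fun x _ => hφ x)
    have hc0 : c < 0 := hc.2
    refine ⟨c, ?_, ?_⟩
    · rw [abs_of_neg hc0, abs_of_neg hr]; linarith [hc.1]
    · have hr0 : r ≠ 0 := ne_of_lt hr
      rw [heq]; field_simp; ring
  · exact ⟨0, by simp [hr], by simp [hr]⟩
  · obtain ⟨c, hc, heq⟩ := exists_hasDerivAt_eq_slope φ φ' hr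
      (fun x _ => (hφ x).continuousAt.continuousWithinAt) (fun x _ => hφ x)
    have hc0 : 0 < c := hc.1
    refine ⟨c, ?_, ?_⟩
    · rw [abs_of_pos hc0, abs_of_pos hr]; linarith [hc.2]
    · have hr0 : r ≠ 0 := ne_of_gt hr
      rw [heq]; field_simp; ring

/-- Vanishing derivatives up to order `m` give a little-o estimate. -/
lemma vanish_isLittleO (m : ℕ) : ∀ (h : ℝ → ℝ), ContDiff ℝ (⊤:ℕ∞) h → h 0 = 0 →
    (∀ k : ℕ, 1 ≤ k → k ≤ m → iteratedDeriv k h 0 = 0) →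
    (fun t => h t) =o[nhds (0:ℝ)] fun t => t ^ m := by
  induction m with
  | zero =>
    intro h hs h0 _
    simp only [pow_zero]
    rw [isLittleO_one_iff]
    have := hs.continuous.tendsto 0
    rwa [h0] at this
  | succ m ih =>
    intro h hs h0 hk
    have hd : Differentiable ℝ h := hs.differentiable (by simp)
    have hs' : ContDiff ℝ (⊤:ℕ∞) (deriv h) := (contDiff_infty_iff_deriv.mp hs).2
    have h0' : deriv h 0 = 0 := by
      have := hk 1 le_rfl (by omega)
      rwa [iteratedDeriv_one] at this
    have hko : ∀ k : ℕ, 1 ≤ k → k ≤ m → iteratedDeriv k (deriv h) 0 = 0 := by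
      intro k h1 h2
      have := hk (k+1) (by omega) (by omega)
      rwa [iteratedDeriv_succ'] at this
    have hlo := ih (deriv h) hs' h0' hko
    rw [isLittleO_iff] at hlo ⊢
    intro c hc
    have h2 := hlo hc
    rw [Metric.eventually_nhds_iff] at h2 ⊢
    obtain ⟨ε, hε, hb⟩ := h2
    refine ⟨ε, hε, fun t ht => ?_⟩
    obtain ⟨ξ, hξ, heq⟩ := mvt1 h (deriv h) (fun s => (hd s).hasDerivAt) t
    rw [h0] at heq
    have hξd : dist ξ 0 < ε := by
      rw [Real.dist_eq, sub_zero] at ht ⊢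
      exact lt_of_le_of_lt hξ ht
    have hbd := hb hξd
    have hpow : ‖ξ ^ m‖ ≤ ‖t ^ m‖ := by
      simp only [norm_pow, Real.norm_eq_abs]
      exact pow_le_pow_left₀ (abs_nonneg ξ) hξ m
    calc ‖h t‖ = ‖t * deriv h ξ‖ := by rw [show h t = t * deriv h ξ by linarith [heq]]
    _ = ‖t‖ * ‖deriv h ξ‖ := norm_mul _ _
    _ ≤ ‖t‖ * (c * ‖ξ ^ m‖) := mul_le_mul_of_nonneg_left hbd (norm_nonneg t)
    _ ≤ ‖t‖ * (c * ‖t ^ m‖) :=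
        mul_le_mul_of_nonneg_left (mul_le_mul_of_nonneg_left hpow hc.le) (norm_nonneg t)
    _ = c * ‖t ^ (m+1)‖ := by
        simp only [Real.norm_eq_abs, abs_mul, abs_pow, pow_succ]; ring

section KeyLemmas

variable {N : ℕ}

lemma hasDerivAt_line (H : (Fin N → ℝ) → ℝ) (hH : ContDiff ℝ (⊤:ℕ∞) H)
    (x u : Fin N → ℝ) (s : ℝ) :
    HasDerivAt (fun s : ℝ => H (x + s • u)) (fderiv ℝ H (x + s • u) u) s := by
  have h1 : HasDerivAt (fun s : ℝ => x + s • u) u s := by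
    simpa using ((hasDerivAt_id s).smul_const u).const_add x
  exact ((hH.differentiable (by simp) (x + s • u)).hasFDerivAt.comp_hasDerivAt
    s h1)

lemma mvtH (H : (Fin N → ℝ) → ℝ) (hH : ContDiff ℝ (⊤:ℕ∞) H) (x u : Fin N → ℝ) (r : ℝ) :
    ∃ ξ : ℝ, |ξ| ≤ |r| ∧ H (x + r • u) - H x = r * fderiv ℝ H (x + ξ • u) u := by
  obtain ⟨ξ, h1, h2⟩ := mvt1 (fun s => H (x + s • u)) (fun s => fderiv ℝ H (x + s • u) u)
    (hasDerivAt_line H hH x u) r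
  refine ⟨ξ, h1, ?_⟩
  simpa using h2

lemma contFD (H : (Fin N → ℝ) → ℝ) (hH : ContDiff ℝ (⊤:ℕ∞) H) (u : Fin N → ℝ) :
    Continuous fun x => fderiv ℝ H x u := by
  exact (hH.continuous_fderiv_apply (by simp)).comp
    (continuous_id.prodMk continuous_const)

lemma KL2 (H : (Fin N → ℝ) → ℝ) (hH : ContDiff ℝ (⊤:ℕ∞) H) (hH0 : H 0 = 0)
    (v w : Fin N → ℝ)
    (hlo : (fun t : ℝ => H (t^2 • v + t^3 • w)) =o[nhds 0] fun t => t^2) :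
    fderiv ℝ H 0 v = 0 := by
  choose ξ₁ hξ₁ hid₁ using fun t : ℝ => mvtH H hH (t^3 • w) v (t^2)
  choose ξ₂ hξ₂ hid₂ using fun t : ℝ => mvtH H hH 0 w (t^3)
  set A : ℝ → Fin N → ℝ := fun t => t^3 • w + ξ₁ t • v with hA
  set K : ℝ → ℝ := fun t => fderiv ℝ H (ξ₂ t • w) w with hK
  have hAlim : Tendsto A (nhds 0) (nhds 0) := by
    apply squeeze_zero_norm (a := fun t => |t^3| * ‖w‖ + t^2 * ‖v‖)
    · intro t
      calc ‖A t‖ ≤ ‖t^3 • w‖ + ‖ξ₁ t • v‖ := norm_add_le _ _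
      _ = |t^3| * ‖w‖ + |ξ₁ t| * ‖v‖ := by simp [norm_smul, Real.norm_eq_abs]
      _ ≤ |t^3| * ‖w‖ + t^2 * ‖v‖ := by
          have := hξ₁ t
          have h2 : |ξ₁ t| ≤ t^2 := by rwa [abs_of_nonneg (sq_nonneg t)] at this
          gcongr
    · have hcont : Continuous fun t : ℝ => |t^3| * ‖w‖ + t^2 * ‖v‖ := by continuity
      have := hcont.tendsto 0
      simpa using this
  have hKlim : Tendsto K (nhds 0) (nhds (fderiv ℝ H 0 w)) := by
    have harg : Tendsto (fun t : ℝ => ξ₂ t • w) (nhds 0) (nhds 0) := by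
      apply squeeze_zero_norm (a := fun t => |t^3| * ‖w‖)
      · intro t
        calc ‖ξ₂ t • w‖ = |ξ₂ t| * ‖w‖ := by simp [norm_smul, Real.norm_eq_abs]
        _ ≤ |t^3| * ‖w‖ := by have := hξ₂ t; gcongr
      · have hcont : Continuous fun t : ℝ => |t^3| * ‖w‖ := by continuity
        have := hcont.tendsto 0
        simpa using this
    have := ((contFD H hH w).tendsto 0).comp harg
    exact this
  set G : ℝ → ℝ := fun t => fderiv ℝ H (A t) v with hG
  have hGlim1 : Tendsto G (nhds 0) (nhds (fderiv ℝ H 0 v)) := by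
    have := ((contFD H hH v).tendsto 0).comp hAlim
    exact this
  have hkey : ∀ t : ℝ, t ≠ 0 → G t = H (t^2 • v + t^3 • w) / t^2 - t * K t := by
    intro t ht
    have ht2 : (t:ℝ)^2 ≠ 0 := pow_ne_zero _ ht
    have e1 := hid₁ t
    have e2 := hid₂ t
    simp only [hH0, sub_zero, zero_add] at e2
    have e3 : H (t^2 • v + t^3 • w) = t^2 * G t + t^3 * K t := by
      rw [hG, hK]
      have hcm : t^3 • w + t^2 • v = t^2 • v + t^3 • w := by rw [add_comm]
      rw [← hcm, ← e2]
      simp only [zero_add] at e1 ⊢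
      linarith [e1]
    rw [e3]
    field_simp
    ring
  have hRlim : Tendsto (fun t : ℝ => H (t^2 • v + t^3 • w) / t^2 - t * K t)
      (nhdsWithin (0:ℝ) {(0:ℝ)}ᶜ) (nhds 0) := by
    have l1 : Tendsto (fun t : ℝ => H (t^2 • v + t^3 • w) / t^2) (nhds 0) (nhds 0) :=
      hlo.tendsto_div_nhds_zero
    have l2 : Tendsto (fun t : ℝ => t * K t) (nhds 0) (nhds (0 * fderiv ℝ H 0 w)) :=
      tendsto_id.mul hKlim
    have l2' : Tendsto (fun t : ℝ => t * K t) (nhds 0) (nhds 0) := by simpa using l2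
    have := (l1.sub l2')
    simpa using this.mono_left nhdsWithin_le_nhds
  have hGlim2 : Tendsto G (nhdsWithin (0:ℝ) {(0:ℝ)}ᶜ) (nhds 0) := by
    apply hRlim.congr'
    filter_upwards [self_mem_nhdsWithin] with t ht
    exact (hkey t ht).symm
  exact tendsto_nhds_unique (hGlim1.mono_left nhdsWithin_le_nhds) hGlim2

lemma KL3 (H : (Fin N → ℝ) → ℝ) (hH : ContDiff ℝ (⊤:ℕ∞) H)
    (v w : Fin N → ℝ)
    (hlo : (fun t : ℝ => H (t^2 • v + t^3 • w)) =o[nhds 0] fun t => t^3) :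
    fderiv ℝ H 0 w = 0 := by
  choose ξ₃ hξ₃ hid₃ using fun t : ℝ => mvtH H hH (t^2 • v + (-(t^3)) • w) w (2*t^3)
  set A : ℝ → Fin N → ℝ := fun t => t^2 • v + (-(t^3)) • w + ξ₃ t • w with hA
  have hAlim : Tendsto A (nhds 0) (nhds 0) := by
    apply squeeze_zero_norm (a := fun t => |t^2| * ‖v‖ + |t^3| * ‖w‖ + |2*t^3| * ‖w‖)
    · intro t
      calc ‖A t‖ ≤ ‖t^2 • v + (-(t^3)) • w‖ + ‖ξ₃ t • w‖ := norm_add_le _ _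
      _ ≤ (‖t^2 • v‖ + ‖(-(t^3)) • w‖) + ‖ξ₃ t • w‖ := by gcongr; exact norm_add_le _ _
      _ = (|t^2| * ‖v‖ + |t^3| * ‖w‖) + |ξ₃ t| * ‖w‖ := by
          simp [norm_smul, Real.norm_eq_abs, abs_neg]
      _ ≤ |t^2| * ‖v‖ + |t^3| * ‖w‖ + |2*t^3| * ‖w‖ := by
          have := hξ₃ t; gcongr
    · have hcont : Continuous fun t : ℝ => |t^2| * ‖v‖ + |t^3| * ‖w‖ + |2*t^3| * ‖w‖ := by
        continuity
      have := hcont.tendsto 0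
      simpa using this
  have harg : ∀ t : ℝ, (t^2 • v + (-(t^3)) • w) + (2*t^3) • w = t^2 • v + t^3 • w := by
    intro t
    rw [add_assoc, ← add_smul, show -(t^3) + 2*t^3 = t^3 by ring]
  set φ : ℝ → ℝ := fun t => H (t^2 • v + (-(t^3)) • w) with hφdef
  have hφ : ∀ t : ℝ, φ t = H ((-t)^2 • v + (-t)^3 • w) := by
    intro t
    rw [hφdef]
    rw [show ((-t):ℝ)^2 = t^2 by ring, show ((-t):ℝ)^3 = -(t^3) by ring]
  have hφo : φ =o[nhds (0:ℝ)] fun t => t^3 := by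
    have hneg : Tendsto (fun t : ℝ => -t) (nhds 0) (nhds 0) := by
      simpa using (continuous_neg.tendsto (0:ℝ))
    have hcomp := hlo.comp_tendsto hneg
    have hbig : (fun t : ℝ => (-t)^3) =O[nhds (0:ℝ)] fun t => t^3 := by
      apply isBigO_of_le
      intro t
      rw [show ((-t):ℝ)^3 = -(t^3) by ring]
      simp
    exact ((hcomp.trans_isBigO hbig).congr (fun t => (hφ t).symm) (fun t => rfl))
  set G : ℝ → ℝ := fun t => fderiv ℝ H (A t) w with hG
  have hGlim1 : Tendsto G (nhds 0) (nhds (fderiv ℝ H 0 w)) := by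
    have := ((contFD H hH w).tendsto 0).comp hAlim
    exact this
  have hkey : ∀ t : ℝ, t ≠ 0 →
      G t = (H (t^2 • v + t^3 • w) / t^3 - φ t / t^3) * (1/2) := by
    intro t ht
    have ht3 : (t:ℝ)^3 ≠ 0 := pow_ne_zero _ ht
    have e1 := hid₃ t
    rw [harg t] at e1
    have e1' : H (t ^ 2 • v + t ^ 3 • w) - φ t = 2 * t ^ 3 * G t := e1
    field_simp
    linear_combination -e1'
  have hRlim : Tendsto (fun t : ℝ => (H (t^2 • v + t^3 • w) / t^3 - φ t / t^3) * (1/2))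
      (nhdsWithin (0:ℝ) {(0:ℝ)}ᶜ) (nhds 0) := by
    have l1 := hlo.tendsto_div_nhds_zero
    have l2 := hφo.tendsto_div_nhds_zero
    have := (l1.sub l2).mul_const (1/2 : ℝ)
    simpa using this.mono_left nhdsWithin_le_nhds
  have hGlim2 : Tendsto G (nhdsWithin (0:ℝ) {(0:ℝ)}ᶜ) (nhds 0) := by
    apply hRlim.congr'
    filter_upwards [self_mem_nhdsWithin] with t ht
    exact (hkey t ht).symm
  exact tendsto_nhds_unique (hGlim1.mono_left nhdsWithin_le_nhds) hGlim2

lemma curve_smooth (v w : Fin N → ℝ) :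
    ContDiff ℝ (⊤:ℕ∞) (fun t : ℝ => t^2 • v + t^3 • w) :=
  ((contDiff_id.pow 2).smul contDiff_const).add ((contDiff_id.pow 3).smul contDiff_const)

lemma curve_deriv1 (H : (Fin N → ℝ) → ℝ) (hH : ContDiff ℝ (⊤:ℕ∞) H) (v w : Fin N → ℝ) :
    iteratedDeriv 1 (fun t : ℝ => H (t^2 • v + t^3 • w)) 0 = 0 := by
  rw [iteratedDeriv_one]
  have hγ : HasDerivAt (fun t : ℝ => t^2 • v + t^3 • w) 0 0 := by
    have := ((hasDerivAt_pow 2 (0:ℝ)).smul_const v).add ((hasDerivAt_pow 3 (0:ℝ)).smul_const w)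
    simp at this; exact this
  have h := (hH.differentiable (by simp) _).hasFDerivAt.comp_hasDerivAt 0 hγ
  have h2 := h.deriv; simp at h2; exact h2

end KeyLemmas

/-! ### vanishOrder computations -/

lemma vanishOrder_le' (h : ℝ → ℝ) (m : ℕ) (h1 : 1 ≤ m) (hne : iteratedDeriv m h 0 ≠ 0) :
    vanishOrder h ≤ m := sInf_le ⟨m, rfl, h1, hne⟩

lemma iteratedDeriv_eq_zero_of_lt_vanishOrder (h : ℝ → ℝ) (m k : ℕ) (hk1 : 1 ≤ k) (hkm : k ≤ m)
    (hlt : (m:ℕ∞) < vanishOrder h) : iteratedDeriv k h 0 = 0 := by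
  by_contra hne
  have h2 := vanishOrder_le' h k hk1 hne
  have h3 : (m:ℕ∞) < (k:ℕ∞) := lt_of_lt_of_le hlt h2
  exact absurd (Nat.cast_le.mpr hkm) (not_le.mpr h3)

lemma le_vanishOrder (h : ℝ → ℝ) (m : ℕ) (hz : ∀ k, 1 ≤ k → k ≤ m → iteratedDeriv k h 0 = 0) :
    ((m+1 : ℕ) : ℕ∞) ≤ vanishOrder h := by
  apply le_sInf
  rintro k ⟨m', rfl, h1, hne⟩
  rw [Nat.cast_le]
  by_contra hlt
  push_neg at hlt
  exact hne (hz m' h1 (by omega))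

lemma iteratedDeriv_zero_fun (m : ℕ) : iteratedDeriv m (fun _ : ℝ => (0:ℝ)) = fun _ => 0 := by
  induction m with
  | zero => simp [iteratedDeriv_zero]
  | succ m ih =>
    rw [iteratedDeriv_succ, ih]
    funext t
    simp

lemma vanishOrder_zero_fun : vanishOrder (fun _ : ℝ => (0:ℝ)) = ⊤ := by
  unfold vanishOrder
  have hset : {k : ℕ∞ | ∃ m : ℕ, k = m ∧ 1 ≤ m ∧ iteratedDeriv m (fun _ : ℝ => (0:ℝ)) 0 ≠ 0}
      = ∅ := by
    rw [Set.eq_empty_iff_forall_notMem]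
    rintro k ⟨m, rfl, h1, hne⟩
    exact hne (by rw [iteratedDeriv_zero_fun])
  rw [hset, sInf_empty]

lemma deriv_cube : deriv (fun t : ℝ => t^3) = fun t => 3*t^2 := by
  funext t; simp [deriv_pow]

lemma vanishOrder_cube : vanishOrder (fun t : ℝ => t^3) = 3 := by
  have d2 : deriv (fun t : ℝ => 3*t^2) = fun t => 6*t := by
    funext t
    rw [deriv_const_mul _ (differentiable_pow 2).differentiableAt]
    simp [deriv_pow]; ring
  have d3 : deriv (fun t : ℝ => 6*t) = fun _ => (6:ℝ) := by
    funext t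
    rw [deriv_const_mul _ differentiable_id.differentiableAt]
    simp
  have e1 : iteratedDeriv 1 (fun t : ℝ => t^3) 0 = 0 := by
    rw [iteratedDeriv_one, deriv_cube]; norm_num
  have e2 : iteratedDeriv 2 (fun t : ℝ => t^3) 0 = 0 := by
    rw [show (2:ℕ) = 1+1 from rfl, iteratedDeriv_succ, iteratedDeriv_one, deriv_cube, d2]
    norm_num
  have e3 : iteratedDeriv 3 (fun t : ℝ => t^3) 0 = 6 := by
    rw [show (3:ℕ) = 1+1+1 from rfl, iteratedDeriv_succ, iteratedDeriv_succ, iteratedDeriv_one,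
      deriv_cube, d2, d3]
  apply le_antisymm
  · have := vanishOrder_le' (fun t : ℝ => t^3) 3 (by norm_num) (by rw [e3]; norm_num)
    exact_mod_cast this
  · have := le_vanishOrder (fun t : ℝ => t^3) 2 (fun k h1 h2 => by
      interval_cases k
      · exact e1
      · exact e2)
    exact_mod_cast this

lemma vanishOrder_negsq : vanishOrder (fun t : ℝ => -t^2) = 2 := by
  have d1 : deriv (fun t : ℝ => -t^2) = fun t => -(2*t) := by
    funext t
    rw [deriv.fun_neg]
    simp [deriv_pow_field]
  have d2 : deriv (fun t : ℝ => -(2*t)) = fun _ => (-2:ℝ) := by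
    funext t
    rw [deriv.fun_neg, deriv_const_mul _ differentiable_id.differentiableAt]
    simp
  have e1 : iteratedDeriv 1 (fun t : ℝ => -t^2) 0 = 0 := by
    rw [iteratedDeriv_one, d1]; norm_num
  have e2 : iteratedDeriv 2 (fun t : ℝ => -t^2) 0 = -2 := by
    rw [show (2:ℕ) = 1+1 from rfl, iteratedDeriv_succ, iteratedDeriv_one, d1, d2]
  apply le_antisymm
  · have := vanishOrder_le' (fun t : ℝ => -t^2) 2 (by norm_num) (by rw [e2]; norm_num)
    exact_mod_cast this
  · have := le_vanishOrder (fun t : ℝ => -t^2) 1 (fun k h1 h2 => by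
      interval_cases k
      exact e1)
    exact_mod_cast this

/-! ### Coordinate Lagrangians -/

def coordSel (n : ℕ) (b : Fin n → Bool) (i : Fin n) : Fin (2*n) :=
  ⟨2 * i.val + (if b i then 1 else 0), by have := i.isLt; split <;> omega⟩

lemma coordSel_inj (n : ℕ) (b : Fin n → Bool) : Function.Injective (coordSel n b) := by
  intro i j h
  have h2 := congrArg Fin.val h
  simp only [coordSel] at h2
  apply Fin.ext
  split at h2 <;> split at h2 <;> omega

lemma fderiv_proj {n : ℕ} (j : Fin (2*n)) (x : Fin (2*n) → ℝ) :
    fderiv ℝ (fun y : Fin (2*n) → ℝ => y j) x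
      = (ContinuousLinearMap.proj j : (Fin (2*n) → ℝ) →L[ℝ] ℝ) :=
  (ContinuousLinearMap.proj j : (Fin (2*n) → ℝ) →L[ℝ] ℝ).fderiv

def coordLag (n : ℕ) (b : Fin n → Bool) : LagrangianGerm n where
  H := fun i x => x (coordSel n b i)
  smooth := fun i =>
    (ContinuousLinearMap.proj (coordSel n b i) : (Fin (2*n) → ℝ) →L[ℝ] ℝ).contDiff
  zero_at_zero := fun i => rfl
  lagrangian := by
    refine ⟨Set.univ, isOpen_univ, trivial, fun x _ _ => ⟨?_, ?_⟩⟩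
    · have hfe : (fun i => fderiv ℝ (fun y : Fin (2*n) → ℝ => y (coordSel n b i)) x)
          = fun i => (ContinuousLinearMap.proj (coordSel n b i) : (Fin (2*n) → ℝ) →L[ℝ] ℝ) := by
        funext i; exact fderiv_proj _ _
      rw [hfe, Fintype.linearIndependent_iff]
      intro g hg i
      have key := congrArg
        (fun L : (Fin (2*n) → ℝ) →L[ℝ] ℝ => L (Pi.single (coordSel n b i) (1:ℝ))) hg
      simp only [ContinuousLinearMap.coe_sum', Finset.sum_apply,
        ContinuousLinearMap.smul_apply, ContinuousLinearMap.proj_apply,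
        ContinuousLinearMap.zero_apply, smul_eq_mul] at key
      rw [Finset.sum_eq_single i] at key
      · simpa using key
      · intro j _ hj
        rw [Pi.single_apply, if_neg (fun h => hj (coordSel_inj n b h)), mul_zero]
      · intro h; exact absurd (Finset.mem_univ i) h
    · intro u v hu hv
      unfold stdSymp
      apply Finset.sum_eq_zero
      intro i _
      have hu' := hu i
      have hv' := hv i
      rw [fderiv_proj] at hu' hv'
      simp only [ContinuousLinearMap.proj_apply] at hu' hv'
      by_cases hb : b i
      · have hidx : coordSel n b i = ⟨2*i.val+1, by have := i.isLt; omega⟩ := by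
          apply Fin.ext; simp [coordSel, hb]
        rw [hidx] at hu' hv'
        rw [hu', hv']; ring
      · have hidx : coordSel n b i = ⟨2*i.val, by have := i.isLt; omega⟩ := by
          apply Fin.ext; simp [coordSel, hb]
        rw [hidx] at hu' hv'
        rw [hu', hv']; ring

lemma tOrd_coordLag {n : ℕ} (f : ℝ → Fin (2*n) → ℝ) (b : Fin n → Bool) :
    tOrd f (coordLag n b) = ⨅ i : Fin n, vanishOrder (fun t => f t (coordSel n b i)) := rfl

/-! ### The specific vectors -/

def wVec (n : ℕ) : Fin (2*n) → ℝ := fun j => if (j:ℕ) = 0 then 1 else 0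

def vVec₁ (n : ℕ) (c : ℝ) : Fin (2*n) → ℝ :=
  fun j => if (j:ℕ) = 1 then -c else if (j:ℕ) = 3 then -1 else 0

def vVec₂ (n : ℕ) (c : ℝ) : Fin (2*n) → ℝ :=
  fun j => if (j:ℕ) = 1 then -c else if (j:ℕ) = 2 then -1 else 0

lemma B₁_eq (n : ℕ) (c : ℝ) :
    (fun (t : ℝ) (j : Fin (2 * n)) => if (j : ℕ) = 0 then t ^ 3 else if (j : ℕ) = 1
      then -c * t ^ 2 else if (j : ℕ) = 3 then -t ^ 2 else (0 : ℝ))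
    = fun t : ℝ => t^2 • vVec₁ n c + t^3 • wVec n := by
  funext t j
  simp only [Pi.add_apply, Pi.smul_apply, vVec₁, wVec, smul_eq_mul]
  split_ifs <;> (try (exfalso; omega)) <;> ring

lemma B₂_eq (n : ℕ) (c : ℝ) :
    (fun (t : ℝ) (j : Fin (2 * n)) => if (j : ℕ) = 0 then t ^ 3 else if (j : ℕ) = 1
      then -c * t ^ 2 else if (j : ℕ) = 2 then -t ^ 2 else (0 : ℝ))
    = fun t : ℝ => t^2 • vVec₂ n c + t^3 • wVec n := by
  funext t j
  simp only [Pi.add_apply, Pi.smul_apply, vVec₂, wVec, smul_eq_mul]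
  split_ifs <;> (try (exfalso; omega)) <;> ring

lemma symp_v₁_w (n : ℕ) (hn : 1 ≤ n) (c : ℝ) : stdSymp n (vVec₁ n c) (wVec n) = c := by
  unfold stdSymp
  rw [Finset.sum_eq_single (⟨0, by omega⟩ : Fin n)]
  · norm_num [vVec₁, wVec]
  · intro i _ hi
    have hiv : i.val ≠ 0 := fun h => hi (Fin.ext h)
    simp only [vVec₁, wVec]
    split_ifs <;> (try (exfalso; omega)) <;> (try simp_all) <;> (try ring)
  · intro h; exact absurd (Finset.mem_univ _) h

lemma symp_v₂_w (n : ℕ) (hn : 1 ≤ n) (c : ℝ) : stdSymp n (vVec₂ n c) (wVec n) = c := by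
  unfold stdSymp
  rw [Finset.sum_eq_single (⟨0, by omega⟩ : Fin n)]
  · norm_num [vVec₂, wVec]
  · intro i _ hi
    have hiv : i.val ≠ 0 := fun h => hi (Fin.ext h)
    simp only [vVec₂, wVec]
    split_ifs <;> (try (exfalso; omega)) <;> (try simp_all) <;> (try ring)
  · intro h; exact absurd (Finset.mem_univ _) h

lemma symp_v₁_v₂ (n : ℕ) (hn : 2 ≤ n) (c₁ c₂ : ℝ) :
    stdSymp n (vVec₁ n c₁) (vVec₂ n c₂) = -1 := by
  unfold stdSymp
  rw [Finset.sum_eq_single (⟨1, by omega⟩ : Fin n)]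
  · norm_num [vVec₁, vVec₂]
  · intro i _ hi
    have hiv : i.val ≠ 1 := fun h => hi (Fin.ext h)
    simp only [vVec₁, vVec₂]
    split_ifs <;> (try (exfalso; omega)) <;> (try simp_all) <;> (try ring)
  · intro h; exact absurd (Finset.mem_univ _) h

/-! ### Upper bounds -/

lemma fderiv_zero_of_high_tangency {n : ℕ} (L : LagrangianGerm n) (v w : Fin (2*n) → ℝ)
    (i : Fin n)
    (h2 : iteratedDeriv 2 (fun t : ℝ => L.H i (t^2 • v + t^3 • w)) 0 = 0) :
    fderiv ℝ (L.H i) 0 v = 0 := by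
  have hsm : ContDiff ℝ (⊤:ℕ∞) (fun t : ℝ => L.H i (t^2 • v + t^3 • w)) :=
    (L.smooth i).comp (curve_smooth v w)
  have h0 : (fun t : ℝ => L.H i (t^2 • v + t^3 • w)) 0 = 0 := by
    norm_num [L.zero_at_zero i]
  have h1 := curve_deriv1 (L.H i) (L.smooth i) v w
  have hlo := vanish_isLittleO 2 _ hsm h0 (fun k hk1 hk2 => by
    interval_cases k
    · exact h1
    · exact h2)
  exact KL2 (L.H i) (L.smooth i) (L.zero_at_zero i) v w hlo

lemma fderiv_zero_of_high_tangency₃ {n : ℕ} (L : LagrangianGerm n) (v w : Fin (2*n) → ℝ)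
    (i : Fin n)
    (h2 : iteratedDeriv 2 (fun t : ℝ => L.H i (t^2 • v + t^3 • w)) 0 = 0)
    (h3 : iteratedDeriv 3 (fun t : ℝ => L.H i (t^2 • v + t^3 • w)) 0 = 0) :
    fderiv ℝ (L.H i) 0 w = 0 := by
  have hsm : ContDiff ℝ (⊤:ℕ∞) (fun t : ℝ => L.H i (t^2 • v + t^3 • w)) :=
    (L.smooth i).comp (curve_smooth v w)
  have h0 : (fun t : ℝ => L.H i (t^2 • v + t^3 • w)) 0 = 0 := by
    norm_num [L.zero_at_zero i]
  have h1 := curve_deriv1 (L.H i) (L.smooth i) v w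
  have hlo := vanish_isLittleO 3 _ hsm h0 (fun k hk1 hk3 => by
    interval_cases k
    · exact h1
    · exact h2
    · exact h3)
  exact KL3 (L.H i) (L.smooth i) v w hlo

lemma tOrd_le_three {n : ℕ} (v w : Fin (2*n) → ℝ) (L : LagrangianGerm n)
    (hsymp : stdSymp n v w ≠ 0) :
    tOrd (fun t : ℝ => t^2 • v + t^3 • w) L ≤ 3 := by
  by_contra hle
  push_neg at hle
  have hall : ∀ i : Fin n, fderiv ℝ (L.H i) 0 v = 0 ∧ fderiv ℝ (L.H i) 0 w = 0 := by
    intro i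
    have hvo : ((3:ℕ):ℕ∞) < vanishOrder (fun t : ℝ => L.H i (t^2 • v + t^3 • w)) := by
      refine lt_of_lt_of_le ?_ (iInf_le _ i : tOrd (fun t : ℝ => t^2 • v + t^3 • w) L ≤ _)
      exact_mod_cast hle
    have h2 := iteratedDeriv_eq_zero_of_lt_vanishOrder _ 3 2 (by norm_num) (by norm_num) hvo
    have h3 := iteratedDeriv_eq_zero_of_lt_vanishOrder _ 3 3 (by norm_num) le_rfl hvo
    exact ⟨fderiv_zero_of_high_tangency L v w i h2,
      fderiv_zero_of_high_tangency₃ L v w i h2 h3⟩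
  obtain ⟨U, _, h0U, hLag⟩ := L.lagrangian
  have := (hLag 0 h0U L.zero_at_zero).2 v w (fun i => (hall i).1) (fun i => (hall i).2)
  exact hsymp this

lemma tOrd_pair_le_two {n : ℕ} (v v' w : Fin (2*n) → ℝ) (L : LagrangianGerm n)
    (hsymp : stdSymp n v v' ≠ 0) :
    min (tOrd (fun t : ℝ => t^2 • v + t^3 • w) L)
      (tOrd (fun t : ℝ => t^2 • v' + t^3 • w) L) ≤ 2 := by
  by_contra hle
  push_neg at hle
  rw [lt_min_iff] at hle
  have hv : ∀ i : Fin n, fderiv ℝ (L.H i) 0 v = 0 := by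
    intro i
    have hvo : ((2:ℕ):ℕ∞) < vanishOrder (fun t : ℝ => L.H i (t^2 • v + t^3 • w)) := by
      refine lt_of_lt_of_le ?_ (iInf_le _ i : tOrd (fun t : ℝ => t^2 • v + t^3 • w) L ≤ _)
      exact_mod_cast hle.1
    exact fderiv_zero_of_high_tangency L v w i
      (iteratedDeriv_eq_zero_of_lt_vanishOrder _ 2 2 (by norm_num) le_rfl hvo)
  have hv' : ∀ i : Fin n, fderiv ℝ (L.H i) 0 v' = 0 := by
    intro i
    have hvo : ((2:ℕ):ℕ∞) < vanishOrder (fun t : ℝ => L.H i (t^2 • v' + t^3 • w)) := by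
      refine lt_of_lt_of_le ?_ (iInf_le _ i : tOrd (fun t : ℝ => t^2 • v' + t^3 • w) L ≤ _)
      exact_mod_cast hle.2
    exact fderiv_zero_of_high_tangency L v' w i
      (iteratedDeriv_eq_zero_of_lt_vanishOrder _ 2 2 (by norm_num) le_rfl hvo)
  obtain ⟨U, _, h0U, hLag⟩ := L.lagrangian
  have := (hLag 0 h0U L.zero_at_zero).2 v v' hv hv'
  exact hsymp this

/-! ### tOrd computations for the coordinate Lagrangians -/

lemma tOrd_coord_B₁ (n : ℕ) (hn : 2 ≤ n) (c : ℝ) :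
    tOrd (fun (t : ℝ) (j : Fin (2 * n)) => if (j : ℕ) = 0 then t ^ 3 else if (j : ℕ) = 1
        then -c * t ^ 2 else if (j : ℕ) = 3 then -t ^ 2 else (0 : ℝ))
      (coordLag n (fun _ => false)) = 3 := by
  rw [tOrd_coordLag]
  have hsel : ∀ i : Fin n, ((coordSel n (fun _ => false) i : Fin (2*n)) : ℕ) = 2 * i.val := by
    intro i; simp [coordSel]
  have hval : ∀ i : Fin n, vanishOrder (fun t : ℝ =>
      (fun (t : ℝ) (j : Fin (2 * n)) => if (j : ℕ) = 0 then t ^ 3 else if (j : ℕ) = 1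
        then -c * t ^ 2 else if (j : ℕ) = 3 then -t ^ 2 else (0 : ℝ)) t
      (coordSel n (fun _ => false) i)) = if i.val = 0 then 3 else ⊤ := by
    intro i
    by_cases hi : i.val = 0
    · have hfun : (fun t : ℝ =>
          (fun (t : ℝ) (j : Fin (2 * n)) => if (j : ℕ) = 0 then t ^ 3 else if (j : ℕ) = 1
            then -c * t ^ 2 else if (j : ℕ) = 3 then -t ^ 2 else (0 : ℝ)) t
          (coordSel n (fun _ => false) i)) = fun t : ℝ => t^3 := by
        funext t
        beta_reduce
        simp [hsel i, hi]
      rw [hfun, vanishOrder_cube, if_pos hi]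
    · have hfun : (fun t : ℝ =>
          (fun (t : ℝ) (j : Fin (2 * n)) => if (j : ℕ) = 0 then t ^ 3 else if (j : ℕ) = 1
            then -c * t ^ 2 else if (j : ℕ) = 3 then -t ^ 2 else (0 : ℝ)) t
          (coordSel n (fun _ => false) i)) = fun _ : ℝ => (0:ℝ) := by
        funext t
        beta_reduce
        simp only [hsel i]
        rw [if_neg (by omega), if_neg (by omega), if_neg (by omega)]
      rw [hfun, vanishOrder_zero_fun, if_neg hi]
  apply le_antisymm
  · refine le_trans (iInf_le _ (⟨0, by omega⟩ : Fin n)) ?_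
    rw [hval]
    norm_num
  · apply le_iInf
    intro i
    rw [hval]
    by_cases hi : i.val = 0
    · rw [if_pos hi]
    · rw [if_neg hi]; exact le_top

lemma tOrd_coord_B₂_false (n : ℕ) (hn : 2 ≤ n) (c : ℝ) :
    tOrd (fun (t : ℝ) (j : Fin (2 * n)) => if (j : ℕ) = 0 then t ^ 3 else if (j : ℕ) = 1
        then -c * t ^ 2 else if (j : ℕ) = 2 then -t ^ 2 else (0 : ℝ))
      (coordLag n (fun _ => false)) = 2 := by
  rw [tOrd_coordLag]
  have hsel : ∀ i : Fin n, ((coordSel n (fun _ => false) i : Fin (2*n)) : ℕ) = 2 * i.val := by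
    intro i; simp [coordSel]
  have hval : ∀ i : Fin n, vanishOrder (fun t : ℝ =>
      (fun (t : ℝ) (j : Fin (2 * n)) => if (j : ℕ) = 0 then t ^ 3 else if (j : ℕ) = 1
        then -c * t ^ 2 else if (j : ℕ) = 2 then -t ^ 2 else (0 : ℝ)) t
      (coordSel n (fun _ => false) i)) = if i.val = 0 then 3 else if i.val = 1 then 2 else ⊤ := by
    intro i
    by_cases hi : i.val = 0
    · have hfun : (fun t : ℝ =>
          (fun (t : ℝ) (j : Fin (2 * n)) => if (j : ℕ) = 0 then t ^ 3 else if (j : ℕ) = 1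
            then -c * t ^ 2 else if (j : ℕ) = 2 then -t ^ 2 else (0 : ℝ)) t
          (coordSel n (fun _ => false) i)) = fun t : ℝ => t^3 := by
        funext t
        beta_reduce
        simp [hsel i, hi]
      rw [hfun, vanishOrder_cube, if_pos hi]
    · by_cases hi1 : i.val = 1
      · have hfun : (fun t : ℝ =>
            (fun (t : ℝ) (j : Fin (2 * n)) => if (j : ℕ) = 0 then t ^ 3 else if (j : ℕ) = 1
              then -c * t ^ 2 else if (j : ℕ) = 2 then -t ^ 2 else (0 : ℝ)) t
            (coordSel n (fun _ => false) i)) = fun t : ℝ => -t^2 := by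
          funext t
          beta_reduce
          simp only [hsel i, hi1]
          norm_num
        rw [hfun, vanishOrder_negsq, if_neg hi, if_pos hi1]
      · have hfun : (fun t : ℝ =>
            (fun (t : ℝ) (j : Fin (2 * n)) => if (j : ℕ) = 0 then t ^ 3 else if (j : ℕ) = 1
              then -c * t ^ 2 else if (j : ℕ) = 2 then -t ^ 2 else (0 : ℝ)) t
            (coordSel n (fun _ => false) i)) = fun _ : ℝ => (0:ℝ) := by
          funext t
          beta_reduce
          simp only [hsel i]
          rw [if_neg (by omega), if_neg (by omega), if_neg (by omega)]
        rw [hfun, vanishOrder_zero_fun, if_neg hi, if_neg hi1]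
  apply le_antisymm
  · refine le_trans (iInf_le _ (⟨1, by omega⟩ : Fin n)) ?_
    rw [hval]
    norm_num
  · apply le_iInf
    intro i
    rw [hval]
    by_cases hi : i.val = 0
    · rw [if_pos hi]; norm_num
    · rw [if_neg hi]
      by_cases hi1 : i.val = 1
      · rw [if_pos hi1]
      · rw [if_neg hi1]; exact le_top

lemma tOrd_coord_B₂_sel (n : ℕ) (hn : 2 ≤ n) (c : ℝ) :
    tOrd (fun (t : ℝ) (j : Fin (2 * n)) => if (j : ℕ) = 0 then t ^ 3 else if (j : ℕ) = 1
        then -c * t ^ 2 else if (j : ℕ) = 2 then -t ^ 2 else (0 : ℝ))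
      (coordLag n (fun i => decide ((i:ℕ) = 1))) = 3 := by
  rw [tOrd_coordLag]
  have hsel : ∀ i : Fin n, ((coordSel n (fun i => decide ((i:ℕ) = 1)) i : Fin (2*n)) : ℕ)
      = 2 * i.val + (if i.val = 1 then 1 else 0) := by
    intro i; simp [coordSel]
  have hval : ∀ i : Fin n, vanishOrder (fun t : ℝ =>
      (fun (t : ℝ) (j : Fin (2 * n)) => if (j : ℕ) = 0 then t ^ 3 else if (j : ℕ) = 1
        then -c * t ^ 2 else if (j : ℕ) = 2 then -t ^ 2 else (0 : ℝ)) t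
      (coordSel n (fun i => decide ((i:ℕ) = 1)) i)) = if i.val = 0 then 3 else ⊤ := by
    intro i
    by_cases hi : i.val = 0
    · have hfun : (fun t : ℝ =>
          (fun (t : ℝ) (j : Fin (2 * n)) => if (j : ℕ) = 0 then t ^ 3 else if (j : ℕ) = 1
            then -c * t ^ 2 else if (j : ℕ) = 2 then -t ^ 2 else (0 : ℝ)) t
          (coordSel n (fun i => decide ((i:ℕ) = 1)) i)) = fun t : ℝ => t^3 := by
        funext t
        beta_reduce
        simp [hsel i, hi]
      rw [hfun, vanishOrder_cube, if_pos hi]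
    · have hfun : (fun t : ℝ =>
          (fun (t : ℝ) (j : Fin (2 * n)) => if (j : ℕ) = 0 then t ^ 3 else if (j : ℕ) = 1
            then -c * t ^ 2 else if (j : ℕ) = 2 then -t ^ 2 else (0 : ℝ)) t
          (coordSel n (fun i => decide ((i:ℕ) = 1)) i)) = fun _ : ℝ => (0:ℝ) := by
        funext t
        beta_reduce
        simp only [hsel i]
        by_cases hi1 : i.val = 1
        · rw [if_pos hi1]
          rw [if_neg (by omega), if_neg (by omega), if_neg (by omega)]
        · rw [if_neg hi1]
          rw [if_neg (by omega), if_neg (by omega), if_neg (by omega)]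
      rw [hfun, vanishOrder_zero_fun, if_neg hi]
  apply le_antisymm
  · refine le_trans (iInf_le _ (⟨0, by omega⟩ : Fin n)) ?_
    rw [hval]
    norm_num
  · apply le_iInf
    intro i
    rw [hval]
    by_cases hi : i.val = 0
    · rw [if_pos hi]
    · rw [if_neg hi]; exact le_top


/-- Lagrangian tangency orders for the class `(T₇)⁰`. -/
theorem T7_0_lagrangian_tangency_orders
    (n : ℕ) (hn : 2 ≤ n) (c₁ c₂ : ℝ) (hc : c₁ * c₂ ≠ 0)
    (B₁ B₂ : ℝ → Fin (2 * n) → ℝ)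
    (hB₁ : B₁ = fun (t : ℝ) (j : Fin (2 * n)) => if (j : ℕ) = 0 then t ^ 3 else if (j : ℕ) = 1 then -c₁ * t ^ 2 else if (j : ℕ) = 3 then -t ^ 2 else (0 : ℝ))
    (hB₂ : B₂ = fun (t : ℝ) (j : Fin (2 * n)) => if (j : ℕ) = 0 then t ^ 3 else if (j : ℕ) = 1 then -c₂ * t ^ 2 else if (j : ℕ) = 2 then -t ^ 2 else (0 : ℝ)) :
    Lt2 B₁ B₂ = 2 ∧ Lt1 B₁ = 3 ∧ Lt1 B₂ = 3  := by
  have hc₁ : c₁ ≠ 0 := left_ne_zero_of_mul hc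
  have hc₂ : c₂ ≠ 0 := right_ne_zero_of_mul hc
  have hB₁' : B₁ = fun t : ℝ => t^2 • vVec₁ n c₁ + t^3 • wVec n := by rw [hB₁, B₁_eq]
  have hB₂' : B₂ = fun t : ℝ => t^2 • vVec₂ n c₂ + t^3 • wVec n := by rw [hB₂, B₂_eq]
  refine ⟨?_, ?_, ?_⟩
  · apply le_antisymm
    · apply iSup_le
      intro L
      rw [hB₁', hB₂']
      exact tOrd_pair_le_two (vVec₁ n c₁) (vVec₂ n c₂) (wVec n) L
        (by rw [symp_v₁_v₂ n hn c₁ c₂]; norm_num)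
    · apply le_iSup_of_le (coordLag n (fun _ => false))
      rw [hB₁, hB₂, tOrd_coord_B₁ n hn c₁, tOrd_coord_B₂_false n hn c₂]
      have hmin : min (3:ℕ∞) 2 = 2 := min_eq_right (by norm_num)
      rw [hmin]
  · apply le_antisymm
    · apply iSup_le
      intro L
      rw [hB₁']
      exact tOrd_le_three (vVec₁ n c₁) (wVec n) L
        (by rw [symp_v₁_w n (by omega) c₁]; exact hc₁)
    · apply le_iSup_of_le (coordLag n (fun _ => false))
      rw [hB₁, tOrd_coord_B₁ n hn c₁]
  · apply le_antisymm
    · apply iSup_le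
      intro L
      rw [hB₂']
      exact tOrd_le_three (vVec₂ n c₂) (wVec n) L
        (by rw [symp_v₂_w n (by omega) c₂]; exact hc₂)
    · apply le_iSup_of_le (coordLag n (fun i => decide ((i:ℕ) = 1)))
      rw [hB₂, tOrd_coord_B₂_sel n hn c₂]

end
end

section
/- Let H₁,…,H_{n−1} : ℝⁿ → ℝ be smooth functions and N = {x ∈ ℝⁿ : H₁(x) = … = H_{n−1}(x) = 0}. Let X_H be the Hamiltonian vector field on N, i.e., the unique smooth vector field on ℝⁿ satisfying X_H ⌟ (dx₁∧…∧dxₙ) = dH₁∧…∧dH_{n−1}; its i-th component is (−1)^{i+1} times the determinant of the Jacobian matrix of (H₁,…,H_{n−1}) with respect to the variables (x₁,…,x_{i−1},x_{i+1},…,xₙ). Then for every closed smooth 2-form α on ℝⁿ, the Lie derivative L_{X_H}α has zero algebraic restriction to N; that is, there exist a smooth 2-form α̃ and a smooth 1-form β̃ on ℝⁿ, both vanishing at every point of N, such that L_{X_H}α = α̃ + dβ̃. -/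
noncomputable section

open Finset

/-- The index in `Fin n` obtained from `l : Fin (n-1)` by skipping the index `i`:
the complementary indices to `i`, in increasing order. -/
def skipIdx {n : ℕ} (i : Fin n) (l : Fin (n - 1)) : Fin n :=
  if h : l.val < i.val then ⟨l.val, by have := i.isLt; omega⟩
  else ⟨l.val + 1, by have := l.isLt; omega⟩

lemma skip_eq {m : ℕ} (p : Fin (m + 1)) (l : Fin m) : skipIdx p l = p.succAbove l := by
  unfold skipIdx
  split_ifs with h
  · rw [Fin.succAbove_of_castSucc_lt _ _ (by rw [Fin.lt_def]; simpa using h)]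
    ext; simp
  · rw [Fin.succAbove_of_le_castSucc _ _ (by rw [Fin.le_def]; simpa using Nat.le_of_not_lt h)]
    ext; simp

/-- Identity (I): expansion of a singular `(n+1)×(n+1)` determinant whose extra column is `A·v`. -/
lemma key_det_identity (m : ℕ) (A : Fin (m + 2) → Fin (m + 1) → ℝ) (v : Fin (m + 1) → ℝ) :
    ∑ k : Fin (m + 2), (-1 : ℝ) ^ (k : ℕ) * (∑ l, A k l * v l) *
      (Matrix.of fun i j => A (k.succAbove i) j).det = 0 := by
  classical
  set C : Matrix (Fin (m + 2)) (Fin (m + 2)) ℝ :=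
    Matrix.of fun i => Fin.cons (∑ l, A i l * v l) (A i) with hC
  have hC0 : C.det = 0 := by
    have h1 : (fun k => ∑ i : Fin (m + 2), (Fin.cons 0 v : Fin (m + 2) → ℝ) i • C k i)
        = fun k => C k 0 := by
      funext k
      rw [Fin.sum_univ_succ]
      simp only [Fin.cons_zero, Fin.cons_succ, zero_smul, zero_add, smul_eq_mul]
      simp [hC, mul_comm]
    have h2 := Matrix.det_updateCol_sum C 0 (Fin.cons 0 v)
    rw [h1, Matrix.updateCol_eq_self] at h2
    simpa using h2
  have h2 := Matrix.det_succ_column_zero C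
  rw [hC0] at h2
  have h3 : ∀ k : Fin (m + 2),
      (-1 : ℝ) ^ (k : ℕ) * C k 0 * (C.submatrix k.succAbove Fin.succ).det
      = (-1 : ℝ) ^ (k : ℕ) * (∑ l, A k l * v l) *
        (Matrix.of fun i j => A (k.succAbove i) j).det := by
    intro k
    have e1 : C k 0 = ∑ l, A k l * v l := by simp [hC]
    have e2 : (C.submatrix k.succAbove Fin.succ) = Matrix.of fun i j => A (k.succAbove i) j := by
      ext i j
      simp [hC]
    rw [e1, e2]
  rw [Finset.sum_congr rfl (fun k _ => h3 k)] at h2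
  exact h2.symm

/-- Laplace expansion when the last row is a standard basis vector. -/
lemma det_snoc_single (m : ℕ) (M : Fin m → Fin (m + 1) → ℝ) (p : Fin (m + 1)) :
    (Matrix.of (Fin.snoc M (Pi.single p 1)) : Matrix (Fin (m + 1)) (Fin (m + 1)) ℝ).det
      = (-1 : ℝ) ^ (m + (p : ℕ)) * (Matrix.of fun k l => M k (p.succAbove l)).det := by
  classical
  rw [Matrix.det_succ_row _ (Fin.last m)]
  rw [Finset.sum_eq_single p]
  · have h1 : (Matrix.of (Fin.snoc M (Pi.single p 1)) : Matrix (Fin (m+1)) (Fin (m+1)) ℝ)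
        (Fin.last m) p = 1 := by simp [Fin.snoc_last]
    have h2 : ((Matrix.of (Fin.snoc M (Pi.single p 1)) : Matrix (Fin (m+1)) (Fin (m+1)) ℝ).submatrix
        (Fin.last m).succAbove p.succAbove) = Matrix.of fun k l => M k (p.succAbove l) := by
      ext i j
      simp [Fin.succAbove_last, Fin.snoc_castSucc]
    rw [h1, h2]
    simp [Fin.val_last]
  · intro j _ hj
    have : (Matrix.of (Fin.snoc M (Pi.single p 1)) : Matrix (Fin (m+1)) (Fin (m+1)) ℝ)
        (Fin.last m) j = 0 := by simp [Fin.snoc_last, Pi.single_apply, hj.symm]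
    rw [this]; ring
  · intro h; exact absurd (Finset.mem_univ p) h

section Smoothness

variable {E' : Type*} [NormedAddCommGroup E'] [NormedSpace ℝ E']

lemma contDiff_finset_prod {ι : Type*} (s : Finset ι) (f : ι → E' → ℝ)
    (h : ∀ i ∈ s, ContDiff ℝ (⊤ : ℕ∞) (f i)) :
    ContDiff ℝ (⊤ : ℕ∞) fun x => ∏ i ∈ s, f i x := by
  classical
  induction s using Finset.cons_induction with
  | empty => simpa using contDiff_const
  | cons a s ha ih =>
      simp only [Finset.prod_cons]
      exact (h a (Finset.mem_cons_self a s)).mul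
        (ih fun i hi => h i (Finset.mem_cons_of_mem hi))

lemma contDiff_det {ι : Type*} [DecidableEq ι] [Fintype ι] (M : E' → Matrix ι ι ℝ)
    (h : ∀ i j, ContDiff ℝ (⊤ : ℕ∞) fun x => M x i j) :
    ContDiff ℝ (⊤ : ℕ∞) fun x => (M x).det := by
  classical
  have : (fun x => (M x).det)
      = fun x => ∑ σ : Equiv.Perm ι, (Equiv.Perm.sign σ : ℝ) * ∏ i, M x (σ i) i := by
    funext x
    rw [Matrix.det_apply']
  rw [this]
  exact ContDiff.sum fun σ _ =>
    contDiff_const.mul (contDiff_finset_prod _ _ fun i _ => h (σ i) i)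

end Smoothness

lemma single_dot {k : ℕ} (p : Fin k) (v : Fin k → ℝ) :
    ∑ l, (Pi.single p 1 : Fin k → ℝ) l * v l = v p := by
  rw [Finset.sum_eq_single p]
  · simp
  · intro l _ hl; simp [Pi.single_apply, hl]
  · intro h; exact absurd (Finset.mem_univ p) h

lemma clm1_expand {k : ℕ} (f : (Fin k → ℝ) →L[ℝ] ℝ) (v : Fin k → ℝ) :
    f v = ∑ l, f (Pi.single l 1) * v l := by
  have := LinearMap.pi_apply_eq_sum_univ (f : (Fin k → ℝ) →ₗ[ℝ] ℝ) v
  simp only [ContinuousLinearMap.coe_coe] at this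
  rw [this]
  refine Finset.sum_congr rfl fun i _ => ?_
  rw [smul_eq_mul, mul_comm]
  congr 2
  funext j
  simp [Pi.single_apply, eq_comm]

lemma clm2_fst_expand {k : ℕ} (S : (Fin k → ℝ) →L[ℝ] (Fin k → ℝ) →L[ℝ] ℝ)
    (u w : Fin k → ℝ) :
    S u w = ∑ p, u p * S (Pi.single p 1) w := by
  have h : S u = ∑ p, u p • S (Pi.single p 1) := by
    have := LinearMap.pi_apply_eq_sum_univ
      (S : (Fin k → ℝ) →ₗ[ℝ] ((Fin k → ℝ) →L[ℝ] ℝ)) u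
    simp only [ContinuousLinearMap.coe_coe] at this
    rw [this]
    refine Finset.sum_congr rfl fun i _ => ?_
    congr 2
    funext j
    simp [Pi.single_apply, eq_comm]
  rw [h]
  simp [ContinuousLinearMap.sum_apply, ContinuousLinearMap.smul_apply]

lemma clm2_snd_expand {k : ℕ} (S : (Fin k → ℝ) →L[ℝ] (Fin k → ℝ) →L[ℝ] ℝ)
    (u w : Fin k → ℝ) :
    S u w = ∑ q, w q * S u (Pi.single q 1) := by
  have := LinearMap.pi_apply_eq_sum_univ ((S u) : (Fin k → ℝ) →ₗ[ℝ] ℝ) w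
  simp only [ContinuousLinearMap.coe_coe] at this
  rw [this]
  refine Finset.sum_congr rfl fun i _ => ?_
  rw [smul_eq_mul]
  congr 2
  funext j
  simp [Pi.single_apply, eq_comm]

lemma clm2_antisymm {k : ℕ} (S : (Fin k → ℝ) →L[ℝ] (Fin k → ℝ) →L[ℝ] ℝ)
    (halt : ∀ u, S u u = 0) (a b : Fin k → ℝ) : S a b = -S b a := by
  have h := halt (a + b)
  simp only [map_add, ContinuousLinearMap.add_apply] at h
  have ha := halt a; have hb := halt b
  linarith

/-- The rows of the `(m+2) × (m+1)` matrix used below. -/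
def rowsA {m : ℕ} (W : Fin m → Fin (m + 1) → ℝ) (p q : Fin (m + 1)) :
    Fin (m + 2) → Fin (m + 1) → ℝ :=
  Fin.snoc (Fin.snoc W (Pi.single p 1)) (Pi.single q 1)

/-- The minor obtained by deleting row `j` of `W` (keeping the two basis rows). -/
def minorD {m : ℕ} (W : Fin m → Fin (m + 1) → ℝ) (j : Fin m) (p q : Fin (m + 1)) : ℝ :=
  (Matrix.of fun i j' => rowsA W p q ((j.castSucc.castSucc).succAbove i) j').det

lemma pointwise_identity (m : ℕ) (W : Fin m → Fin (m + 1) → ℝ)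
    (S : (Fin (m + 1) → ℝ) →L[ℝ] (Fin (m + 1) → ℝ) →L[ℝ] ℝ)
    (halt : ∀ u, S u u = 0)
    (Xv : Fin (m + 1) → ℝ)
    (hXv : ∀ p : Fin (m + 1), Xv p = (-1 : ℝ) ^ (p : ℕ) *
      (Matrix.of fun (k : Fin m) (l : Fin m) => W k (p.succAbove l)).det)
    (v : Fin (m + 1) → ℝ) :
    S Xv v = ∑ j : Fin m, ((-1 : ℝ) ^ (j : ℕ) / 2 *
        ∑ p : Fin (m + 1), ∑ q : Fin (m + 1),
          S (Pi.single p 1) (Pi.single q 1) * minorD W j p q) *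
      (∑ l, W j l * v l) := by
  classical
  set TT : Fin (m + 1) → ℝ := fun p =>
    (Matrix.of (Fin.snoc W (Pi.single p 1)) : Matrix (Fin (m + 1)) (Fin (m + 1)) ℝ).det
    with hTTdef
  have hTT : ∀ p, TT p = (-1 : ℝ) ^ m * Xv p := by
    intro p
    rw [hTTdef]
    simp only
    rw [det_snoc_single, hXv p, pow_add]
    ring
  -- the basic identity for fixed p q
  have hpq : ∀ p q : Fin (m + 1),
      (∑ j : Fin m, (-1 : ℝ) ^ (j : ℕ) * (∑ l, W j l * v l) * minorD W j p q)
        + (-1 : ℝ) ^ m * v p * TT q + (-1 : ℝ) ^ (m + 1) * v q * TT p = 0 := by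
    intro p q
    have h := key_det_identity m (rowsA W p q) v
    rw [Fin.sum_univ_castSucc] at h
    rw [Fin.sum_univ_castSucc (fun x : Fin (m + 1) => _)] at h
    -- identify the three groups of terms
    have e1 : ∀ j : Fin m,
        (-1 : ℝ) ^ ((j.castSucc.castSucc : Fin (m + 2)) : ℕ) *
            (∑ l, rowsA W p q j.castSucc.castSucc l * v l) *
            (Matrix.of fun i j' => rowsA W p q ((j.castSucc.castSucc).succAbove i) j').det
          = (-1 : ℝ) ^ (j : ℕ) * (∑ l, W j l * v l) * minorD W j p q := by
      intro j
      have hr : rowsA W p q j.castSucc.castSucc = W j := by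
        simp [rowsA, Fin.snoc_castSucc]
      rw [hr]
      rfl
    have e2 : (-1 : ℝ) ^ (((Fin.last m).castSucc : Fin (m + 2)) : ℕ) *
          (∑ l, rowsA W p q (Fin.last m).castSucc l * v l) *
          (Matrix.of fun i j' => rowsA W p q (((Fin.last m).castSucc).succAbove i) j').det
        = (-1 : ℝ) ^ m * v p * TT q := by
      have hr : rowsA W p q (Fin.last m).castSucc = Pi.single p 1 := by
        simp [rowsA, Fin.snoc_castSucc, Fin.snoc_last]
      have hm : (Matrix.of fun i j' => rowsA W p q (((Fin.last m).castSucc).succAbove i) j')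
          = Matrix.of (Fin.snoc W (Pi.single q 1)) := by
        ext i j'
        simp only [Matrix.of_apply]
        refine Fin.lastCases ?_ (fun i' => ?_) i
        · have : ((Fin.last m).castSucc).succAbove (Fin.last m) = Fin.last (m + 1) := by
            rw [Fin.succAbove_of_le_castSucc _ _ (le_refl _), Fin.succ_last]
          rw [this]
          simp [rowsA, Fin.snoc_last]
        · have : ((Fin.last m).castSucc).succAbove i'.castSucc = i'.castSucc.castSucc := by
            refine Fin.succAbove_of_castSucc_lt _ _ ?_
            exact Fin.castSucc_lt_castSucc_iff.mpr (Fin.castSucc_lt_last i')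
          rw [this]
          simp [rowsA, Fin.snoc_castSucc]
      rw [hr, hm, single_dot]
      simp [hTTdef, Fin.val_last]
    have e3 : (-1 : ℝ) ^ ((Fin.last (m + 1) : Fin (m + 2)) : ℕ) *
          (∑ l, rowsA W p q (Fin.last (m + 1)) l * v l) *
          (Matrix.of fun i j' => rowsA W p q ((Fin.last (m + 1)).succAbove i) j').det
        = (-1 : ℝ) ^ (m + 1) * v q * TT p := by
      have hr : rowsA W p q (Fin.last (m + 1)) = Pi.single q 1 := by
        simp [rowsA, Fin.snoc_last]
      have hm : (Matrix.of fun i j' => rowsA W p q ((Fin.last (m + 1)).succAbove i) j')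
          = Matrix.of (Fin.snoc W (Pi.single p 1)) := by
        ext i j'
        simp only [Matrix.of_apply]
        rw [Fin.succAbove_last]
        refine Fin.lastCases ?_ (fun i' => ?_) i
        · simp [rowsA, Fin.snoc_last, Fin.snoc_castSucc]
        · simp [rowsA, Fin.snoc_castSucc]
      rw [hr, hm, single_dot]
      simp [hTTdef, Fin.val_last]
    rw [Finset.sum_congr rfl (fun j _ => e1 j), e2, e3] at h
    exact h
  -- sum the identity against S (e p) (e q)
  have hsum : ∑ p : Fin (m + 1), ∑ q : Fin (m + 1),
      S (Pi.single p 1) (Pi.single q 1) *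
        ((∑ j : Fin m, (-1 : ℝ) ^ (j : ℕ) * (∑ l, W j l * v l) * minorD W j p q)
          + (-1 : ℝ) ^ m * v p * TT q + (-1 : ℝ) ^ (m + 1) * v q * TT p) = 0 := by
    apply Finset.sum_eq_zero; intro p _
    apply Finset.sum_eq_zero; intro q _
    rw [hpq p q, mul_zero]
  -- split into three sums
  have hsplit : (∑ p : Fin (m + 1), ∑ q : Fin (m + 1),
        S (Pi.single p 1) (Pi.single q 1) *
          (∑ j : Fin m, (-1 : ℝ) ^ (j : ℕ) * (∑ l, W j l * v l) * minorD W j p q))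
      + (∑ p : Fin (m + 1), ∑ q : Fin (m + 1),
        S (Pi.single p 1) (Pi.single q 1) * ((-1 : ℝ) ^ m * v p * TT q))
      + (∑ p : Fin (m + 1), ∑ q : Fin (m + 1),
        S (Pi.single p 1) (Pi.single q 1) * ((-1 : ℝ) ^ (m + 1) * v q * TT p)) = 0 := by
    rw [← hsum]
    rw [← Finset.sum_add_distrib, ← Finset.sum_add_distrib]
    refine Finset.sum_congr rfl fun p _ => ?_
    rw [← Finset.sum_add_distrib, ← Finset.sum_add_distrib]
    refine Finset.sum_congr rfl fun q _ => ?_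
    ring
  -- term 2 equals -(S Xv v)
  have hterm2 : (∑ p : Fin (m + 1), ∑ q : Fin (m + 1),
      S (Pi.single p 1) (Pi.single q 1) * ((-1 : ℝ) ^ m * v p * TT q)) = -(S Xv v) := by
    have : ∀ p q : Fin (m + 1), S (Pi.single p 1) (Pi.single q 1) *
        ((-1 : ℝ) ^ m * v p * TT q) = v p * S (Pi.single p 1) (Pi.single q 1) * Xv q *
          ((-1 : ℝ) ^ m * (-1 : ℝ) ^ m) := by
      intro p q; rw [hTT q]; ring
    simp_rw [this, ← pow_add, ← two_mul, pow_mul]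
    norm_num
    calc ∑ p : Fin (m + 1), ∑ q : Fin (m + 1),
          v p * S (Pi.single p 1) (Pi.single q 1) * Xv q
        = ∑ q : Fin (m + 1), Xv q * ∑ p, v p * S (Pi.single p 1) (Pi.single q 1) := by
          rw [Finset.sum_comm]
          refine Finset.sum_congr rfl fun q _ => ?_
          rw [Finset.mul_sum]
          refine Finset.sum_congr rfl fun p _ => by ring
      _ = ∑ q : Fin (m + 1), Xv q * (S v (Pi.single q 1)) := by
          refine Finset.sum_congr rfl fun q _ => ?_
          rw [← clm2_fst_expand]
      _ = ∑ q : Fin (m + 1), Xv q * (-(S (Pi.single q 1) v)) := by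
          refine Finset.sum_congr rfl fun q _ => ?_
          rw [clm2_antisymm S halt v (Pi.single q 1)]
      _ = -(∑ q : Fin (m + 1), Xv q * S (Pi.single q 1) v) := by
          rw [← Finset.sum_neg_distrib]
          exact Finset.sum_congr rfl fun q _ => by ring
      _ = -(S Xv v) := by rw [← clm2_fst_expand]
  -- term 3 equals -(S Xv v)
  have hterm3 : (∑ p : Fin (m + 1), ∑ q : Fin (m + 1),
      S (Pi.single p 1) (Pi.single q 1) * ((-1 : ℝ) ^ (m + 1) * v q * TT p)) = -(S Xv v) := by
    have : ∀ p q : Fin (m + 1), S (Pi.single p 1) (Pi.single q 1) *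
        ((-1 : ℝ) ^ (m + 1) * v q * TT p)
          = -(Xv p * (v q * S (Pi.single p 1) (Pi.single q 1))) *
            ((-1 : ℝ) ^ m * (-1 : ℝ) ^ m) := by
      intro p q; rw [hTT p, pow_succ]; ring
    simp_rw [this, ← pow_add, ← two_mul, pow_mul]
    norm_num
    calc ∑ p : Fin (m + 1), ∑ q : Fin (m + 1),
          Xv p * (v q * S (Pi.single p 1) (Pi.single q 1))
        = ∑ p : Fin (m + 1), Xv p * S (Pi.single p 1) v := by
          refine Finset.sum_congr rfl fun p _ => ?_
          rw [← Finset.mul_sum, ← clm2_snd_expand]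
      _ = S Xv v := (clm2_fst_expand S Xv v).symm
  -- term 1 reorganization
  have hT1 : (∑ p : Fin (m + 1), ∑ q : Fin (m + 1),
        S (Pi.single p 1) (Pi.single q 1) *
          (∑ j : Fin m, (-1 : ℝ) ^ (j : ℕ) * (∑ l, W j l * v l) * minorD W j p q))
      = ∑ j : Fin m, (-1 : ℝ) ^ (j : ℕ) * (∑ l, W j l * v l) *
          (∑ p : Fin (m + 1), ∑ q : Fin (m + 1),
            S (Pi.single p 1) (Pi.single q 1) * minorD W j p q) := by
    have e1 : ∀ p : Fin (m + 1), ∑ q : Fin (m + 1),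
        S (Pi.single p 1) (Pi.single q 1) *
          (∑ j : Fin m, (-1 : ℝ) ^ (j : ℕ) * (∑ l, W j l * v l) * minorD W j p q)
        = ∑ j : Fin m, ∑ q : Fin (m + 1), S (Pi.single p 1) (Pi.single q 1) *
            ((-1 : ℝ) ^ (j : ℕ) * (∑ l, W j l * v l) * minorD W j p q) := by
      intro p
      have e0 : ∀ q : Fin (m + 1), S (Pi.single p 1) (Pi.single q 1) *
          (∑ j : Fin m, (-1 : ℝ) ^ (j : ℕ) * (∑ l, W j l * v l) * minorD W j p q)
          = ∑ j : Fin m, S (Pi.single p 1) (Pi.single q 1) *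
              ((-1 : ℝ) ^ (j : ℕ) * (∑ l, W j l * v l) * minorD W j p q) :=
        fun q => Finset.mul_sum _ _ _
      rw [Finset.sum_congr rfl fun q _ => e0 q]
      exact Finset.sum_comm
    rw [Finset.sum_congr rfl fun p _ => e1 p, Finset.sum_comm]
    refine Finset.sum_congr rfl fun j _ => ?_
    conv_rhs => rw [Finset.mul_sum]
    refine Finset.sum_congr rfl fun p _ => ?_
    conv_rhs => rw [Finset.mul_sum]
    exact Finset.sum_congr rfl fun q _ => by ring
  rw [hT1, hterm2, hterm3] at hsplit
  have h2S : (∑ j : Fin m, (-1 : ℝ) ^ (j : ℕ) * (∑ l, W j l * v l) *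
      (∑ p : Fin (m + 1), ∑ q : Fin (m + 1),
        S (Pi.single p 1) (Pi.single q 1) * minorD W j p q)) = 2 * S Xv v := by
    linarith
  have hfin : ∑ j : Fin m, ((-1 : ℝ) ^ (j : ℕ) / 2 *
        ∑ p : Fin (m + 1), ∑ q : Fin (m + 1),
          S (Pi.single p 1) (Pi.single q 1) * minorD W j p q) * (∑ l, W j l * v l)
      = (1 / 2) * ∑ j : Fin m, (-1 : ℝ) ^ (j : ℕ) * (∑ l, W j l * v l) *
          (∑ p : Fin (m + 1), ∑ q : Fin (m + 1),
            S (Pi.single p 1) (Pi.single q 1) * minorD W j p q) := by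
    rw [Finset.mul_sum]
    exact Finset.sum_congr rfl fun j _ => by ring
  rw [hfin, h2S]
  ring

/-- The Jacobian rows. -/
def Wmat {m : ℕ} (H : Fin m → (Fin (m + 1) → ℝ) → ℝ) (x : Fin (m + 1) → ℝ)
    (k : Fin m) (l : Fin (m + 1)) : ℝ := fderiv ℝ (H k) x (Pi.single l 1)

/-- The coefficient functions `μ_j` with `X ⌟ α = ∑ μ_j dH_j`. -/
def muF {m : ℕ} (H : Fin m → (Fin (m + 1) → ℝ) → ℝ)
    (α : (Fin (m + 1) → ℝ) → (Fin (m + 1) → ℝ) →L[ℝ] (Fin (m + 1) → ℝ) →L[ℝ] ℝ)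
    (x : Fin (m + 1) → ℝ) (j : Fin m) : ℝ :=
  (-1 : ℝ) ^ (j : ℕ) / 2 * ∑ p : Fin (m + 1), ∑ q : Fin (m + 1),
    α x (Pi.single p 1) (Pi.single q 1) * minorD (Wmat H x) j p q

/-- The potential `g = ∑ μ_j H_j`. -/
def gF {m : ℕ} (H : Fin m → (Fin (m + 1) → ℝ) → ℝ)
    (α : (Fin (m + 1) → ℝ) → (Fin (m + 1) → ℝ) →L[ℝ] (Fin (m + 1) → ℝ) →L[ℝ] ℝ)
    (x : Fin (m + 1) → ℝ) : ℝ := ∑ j, muF H α x j * H j x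

/-- Let `H₁, …, H_{n-1} : ℝⁿ → ℝ` be smooth and `N = {H₁ = ⋯ = H_{n-1} = 0}`. Let `X_H` be
the Hamiltonian vector field on `N`, i.e. the vector field `X_H ⌟ (dx₁∧…∧dxₙ) = dH₁∧…∧dH_{n-1}`,
whose `i`-th component is `(-1)^{i+1}` (with `1`-indexed `i`) times the determinant of the
Jacobian matrix of `(H₁,…,H_{n-1})` with respect to the variables obtained by omitting `xᵢ`.
Then for every closed smooth `2`-form `α` on `ℝⁿ` the Lie derivative `L_{X_H} α = d(X_H ⌟ α)`
has zero algebraic restriction to `N`: there are a smooth `2`-form `A` and a smooth `1`-form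
`B`, both vanishing at every point of `N`, with `L_{X_H} α = A + dB`. -/
theorem lie_derivative_along_hamiltonian_field_zero_algebraic_restriction
    (n : ℕ) (hn : 2 ≤ n)
    (H : Fin (n - 1) → (Fin n → ℝ) → ℝ) (hH : ∀ k, ContDiff ℝ (⊤ : ℕ∞) (H k))
    (N : Set (Fin n → ℝ)) (hN : N = {x | ∀ k, H k x = 0})
    (X : (Fin n → ℝ) → (Fin n → ℝ))
    (hX : ∀ x i, X x i = (-1 : ℝ) ^ ((i : ℕ) + 1 + 1) *
        (Matrix.of fun k l : Fin (n - 1) =>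
          fderiv ℝ (H k) x (Pi.single (skipIdx i l) 1)).det)
    (α : (Fin n → ℝ) → (Fin n → ℝ) →L[ℝ] (Fin n → ℝ) →L[ℝ] ℝ)
    (hα : ContDiff ℝ (⊤ : ℕ∞) α)
    (hαalt : ∀ x u, α x u u = 0)
    (hαclosed : ∀ x u v w,
      fderiv ℝ α x u v w - fderiv ℝ α x v u w + fderiv ℝ α x w u v = 0) :
    ∃ (A : (Fin n → ℝ) → (Fin n → ℝ) →L[ℝ] (Fin n → ℝ) →L[ℝ] ℝ)
      (B : (Fin n → ℝ) → (Fin n → ℝ) →L[ℝ] ℝ),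
      ContDiff ℝ (⊤ : ℕ∞) A ∧ ContDiff ℝ (⊤ : ℕ∞) B ∧
      (∀ x u, A x u u = 0) ∧
      (∀ x ∈ N, A x = 0) ∧ (∀ x ∈ N, B x = 0) ∧
      ∀ x u v,
        fderiv ℝ (fun y => α y (X y)) x u v - fderiv ℝ (fun y => α y (X y)) x v u =
          A x u v + (fderiv ℝ B x u v - fderiv ℝ B x v u) := by
  classical
  obtain ⟨m, rfl⟩ : ∃ m, n = m + 1 := ⟨n - 1, by omega⟩
  -- convenient coercion facts
  have hone : (1 : WithTop ℕ∞) ≤ ((⊤ : ℕ∞) : WithTop ℕ∞) := by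
    rw [show ((1 : WithTop ℕ∞)) = ((1 : ℕ∞) : WithTop ℕ∞) by rfl]
    exact WithTop.coe_le_coe.mpr le_top
  have h2top : (2 : WithTop ℕ∞) ≤ ((⊤ : ℕ∞) : WithTop ℕ∞) := by
    rw [show ((2 : WithTop ℕ∞)) = ((2 : ℕ∞) : WithTop ℕ∞) by rfl]
    exact WithTop.coe_le_coe.mpr le_top
  -- the formula for X in terms of succAbove
  have hXf : ∀ x (p : Fin (m + 1)), X x p = (-1 : ℝ) ^ (p : ℕ) *
      (Matrix.of fun (k l : Fin m) => Wmat (m := m) H x k (p.succAbove l)).det := by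
    intro x p
    rw [hX x p]
    have h1 : (Matrix.of fun k l : Fin (m + 1 - 1) =>
          fderiv ℝ (H k) x (Pi.single (skipIdx p l) 1))
        = (Matrix.of fun (k l : Fin m) => Wmat (m := m) H x k (p.succAbove l)) := by
      ext k l
      simp only [Matrix.of_apply, Wmat]
      rw [skip_eq]
    rw [h1]
    have h2 : (-1 : ℝ) ^ ((p : ℕ) + 1 + 1) = (-1 : ℝ) ^ (p : ℕ) := by
      rw [pow_succ, pow_succ]; ring
    rw [h2]
  -- smoothness of the Jacobian entries
  have hWs : ∀ (k : Fin m) (l : Fin (m + 1)),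
      ContDiff ℝ (⊤ : ℕ∞) fun x => Wmat (m := m) H x k l := by
    intro k l
    exact ((hH k).fderiv_right (by simp)).clm_apply contDiff_const
  -- smoothness of X
  have hXs : ContDiff ℝ (⊤ : ℕ∞) X := by
    have hXeq : X = fun x => fun p : Fin (m + 1) => (-1 : ℝ) ^ (p : ℕ) *
        (Matrix.of fun (k l : Fin m) => Wmat (m := m) H x k (p.succAbove l)).det := by
      funext x p; exact hXf x p
    rw [hXeq]
    refine contDiff_pi.mpr fun p => ?_
    exact contDiff_const.mul (contDiff_det _ (fun k l => hWs k _))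
  -- smoothness of the minors
  have hrowA : ∀ (p q : Fin (m + 1)) (k : Fin (m + 2)) (j' : Fin (m + 1)),
      ContDiff ℝ (⊤ : ℕ∞) fun x => rowsA (Wmat (m := m) H x) p q k j' := by
    intro p q k j'
    refine Fin.lastCases ?_ (fun k' => ?_) k
    · have h : (fun x => rowsA (Wmat (m := m) H x) p q (Fin.last (m + 1)) j')
          = fun _ => (Pi.single q 1 : Fin (m + 1) → ℝ) j' := by
        funext x; simp [rowsA]
      rw [h]; exact contDiff_const
    · refine Fin.lastCases ?_ (fun k'' => ?_) k'
      · have h : (fun x => rowsA (Wmat (m := m) H x) p q (Fin.castSucc (Fin.last m)) j')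
            = fun _ => (Pi.single p 1 : Fin (m + 1) → ℝ) j' := by
          funext x; simp [rowsA]
        rw [h]; exact contDiff_const
      · have h : (fun x => rowsA (Wmat (m := m) H x) p q (Fin.castSucc (Fin.castSucc k'')) j')
            = fun x => Wmat (m := m) H x k'' j' := by
          funext x; simp [rowsA]
        rw [h]; exact hWs k'' j'
  have hminorD : ∀ (j : Fin m) (p q : Fin (m + 1)),
      ContDiff ℝ (⊤ : ℕ∞) fun x => minorD (Wmat (m := m) H x) j p q := by
    intro j p q
    exact contDiff_det _ (fun i j' => hrowA p q _ j')
  -- smoothness of μ and g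
  have hμs : ∀ j : Fin m, ContDiff ℝ (⊤ : ℕ∞) fun x => muF (m := m) H α x j := by
    intro j
    unfold muF
    exact contDiff_const.mul (ContDiff.sum fun p _ => ContDiff.sum fun q _ =>
      ((hα.clm_apply contDiff_const).clm_apply contDiff_const).mul (hminorD j p q))
  have hgs : ContDiff ℝ (⊤ : ℕ∞) (gF (m := m) H α) := by
    unfold gF
    exact ContDiff.sum fun j _ => (hμs j).mul (hH j)
  have hγs : ContDiff ℝ (⊤ : ℕ∞) fun y => α y (X y) := hα.clm_apply hXs
  have hdg : ContDiff ℝ (⊤ : ℕ∞) (fderiv ℝ (gF (m := m) H α)) := hgs.fderiv_right (by simp)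
  -- the key pointwise identity
  have key : ∀ x v, α x (X x) v = ∑ j : Fin m, muF (m := m) H α x j * fderiv ℝ (H j) x v := by
    intro x v
    have hp := pointwise_identity m (Wmat (m := m) H x) (α x) (hαalt x) (X x) (hXf x) v
    rw [hp]
    refine Finset.sum_congr rfl fun j _ => ?_
    congr 1
    rw [clm1_expand (fderiv ℝ (H j) x) v]
    rfl
  -- derivative of g
  have hdgx : ∀ x, fderiv ℝ (gF (m := m) H α) x
      = ∑ j : Fin m, (muF (m := m) H α x j • fderiv ℝ (H j) x
          + H j x • fderiv ℝ (fun y => muF (m := m) H α y j) x) := by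
    intro x
    have h : HasFDerivAt (fun y => ∑ j : Fin m, muF (m := m) H α y j * H j y)
        (∑ j : Fin m, (muF (m := m) H α x j • fderiv ℝ (H j) x
          + H j x • fderiv ℝ (fun y => muF (m := m) H α y j) x)) x := by
      refine HasFDerivAt.fun_sum fun j _ => ?_
      exact (((hμs j).differentiable (by simp) x).hasFDerivAt).mul
        (((hH j).differentiable (by simp) x).hasFDerivAt)
    exact h.fderiv
  refine ⟨fun _ => 0, fun x => α x (X x) - fderiv ℝ (gF (m := m) H α) x,
    contDiff_const, hγs.sub hdg, by simp, by simp, ?_, ?_⟩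
  · -- B vanishes on N
    intro x hx
    rw [hN] at hx
    have hx' : ∀ k, H k x = 0 := hx
    show α x (X x) - fderiv ℝ (gF (m := m) H α) x = 0
    rw [sub_eq_zero]
    ext v
    rw [hdgx x]
    simp only [ContinuousLinearMap.sum_apply, ContinuousLinearMap.add_apply,
      ContinuousLinearMap.smul_apply, smul_eq_mul]
    rw [key x v]
    refine Finset.sum_congr rfl fun j _ => ?_
    rw [hx' j]
    ring
  · -- the exactness equation
    intro x u v
    have hBdiff : DifferentiableAt ℝ (fun y => α y (X y) - fderiv ℝ (gF (m := m) H α) y) x :=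
      ((hγs.sub hdg).differentiable (by simp) x)
    have hdgdiff : DifferentiableAt ℝ (fderiv ℝ (gF (m := m) H α)) x :=
      (hdg.differentiable (by simp) x)
    have hfun : (fun y => α y (X y))
        = fun y => (α y (X y) - fderiv ℝ (gF (m := m) H α) y) + fderiv ℝ (gF (m := m) H α) y := by
      funext y
      rw [sub_add_cancel]
    rw [hfun, fderiv_fun_add hBdiff hdgdiff]
    have hsym := ((hgs.contDiffAt (x := x)).isSymmSndFDerivAt (by rw [minSmoothness_of_isRCLikeNormedField]; exact h2top)).eq u v
    simp only [ContinuousLinearMap.add_apply, ContinuousLinearMap.zero_apply]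
    linarith

end
end
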